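/- Let 1 < ρ < ∞ with conjugate exponent ϱ (1/ρ + 1/ϱ = 1). For all nonnegative integers m, q', every A ∈ M_{n,n'}(m,q';F) and all row vectors h^1, h^2, ..., h^m ∈ M_{n,n}(0,1;F), one has ‖((h^1⊙h^2⊙···⊙h^m)/m!)·A‖_ρ ≤ ‖h^1‖_ϱ·‖h^2‖_ϱ···‖h^m‖_ϱ·‖A‖_ρ, where ‖h‖_ϱ = (Σ_i |h_i|^ϱ)^{1/ϱ} and the dot denotes the ordinary matrix product. -/

import Mathlib

open scoped BigOperators ENNReal

noncomputable section

/-- The degree `|α|` of a multi-index `α ∈ ℕ^n`. -/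
def mdeg {n : ℕ} (α : Fin n → ℕ) : ℕ := ∑ i, α i

/-- The factorial `α! = α₁! ⋯ αₙ!` of a multi-index. -/
def mfact {n : ℕ} (α : Fin n → ℕ) : ℕ := ∏ i, (α i).factorial

/-- The multi-indices in `ℕ^n` of degree `p`. -/
abbrev MIdx (n p : ℕ) := {α : Fin n → ℕ // mdeg α = p}

instance (n p : ℕ) : Fintype (MIdx n p) :=
  Fintype.subtype (Finset.Nat.antidiagonalTuple n p) (fun α => by
    simp [Finset.Nat.mem_antidiagonalTuple, mdeg])

/-- The space `M(p,p';F)` of matrices with rows indexed by degree-`p` multi-indices in `ℕ^n`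
and columns indexed by degree-`p'` multi-indices in `ℕ^n'`. -/
abbrev MMat (n n' p p' : ℕ) (F : Type*) := MIdx n p → MIdx n' p' → F

lemma mdeg_sub {n p q : ℕ} (α : MIdx n (p + q)) (β : MIdx n p) (h : ∀ i, β.1 i ≤ α.1 i) :
    mdeg (α.1 - β.1) = q := by
  have h1 : mdeg (α.1 - β.1) + mdeg β.1 = mdeg α.1 := by
    simp only [mdeg, ← Finset.sum_add_distrib]
    exact Finset.sum_congr rfl fun i _ => Nat.sub_add_cancel (h i)
  have h2 := α.2
  have h3 := β.2
  omega

/-- The product `⊙` of `A ∈ M(p,p';F)` and `B ∈ M(q,q';F)`: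
`(A⊙B)_{α,α'} = Σ_{β≤α, β'≤α', |β|=p, |β'|=p'} (α!/(β!(α−β)!)) A_{β,β'} B_{α−β,α'−β'}`. -/
def oprod {n n' p p' q q' : ℕ} {F : Type*} [RCLike F]
    (A : MMat n n' p p' F) (B : MMat n n' q q' F) : MMat n n' (p + q) (p' + q') F :=
  fun α α' =>
    ∑ β : MIdx n p, ∑ β' : MIdx n' p',
      if h : (∀ i, β.1 i ≤ α.1 i) ∧ (∀ j, β'.1 j ≤ α'.1 j) then
        ((mfact α.1 : F) / ((mfact β.1 : F) * (mfact (α.1 - β.1) : F))) * A β β' *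
          B ⟨α.1 - β.1, mdeg_sub α β h.1⟩ ⟨α'.1 - β'.1, mdeg_sub α' β' h.2⟩
      else 0

/-- Change the degree parameter of a multi-index along an equality of natural numbers. -/
def recast {n a b : ℕ} (h : a = b) (α : MIdx n a) : MIdx n b := ⟨α.1, h ▸ α.2⟩

/-- The ordinary matrix product. -/
def mmul {n n' p q q' : ℕ} {F : Type*} [RCLike F]
    (A : MMat n n p q F) (B : MMat n n' q q' F) : MMat n n' p q' F :=
  fun α α' => ∑ β : MIdx n q, A α β * B β α'

/-- The `m`-th `⊙`-power of a row `h ∈ M(0,1;F)`. -/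
def opowRow {n : ℕ} {F : Type*} [RCLike F] (h : MMat n n 0 1 F) : (m : ℕ) → MMat n n 0 m F
  | 0 => fun _ _ => 1
  | m + 1 => fun z α => oprod h (opowRow h m) z (recast (Nat.add_comm m 1) α)

/-- The `m`-th `⊙`-power of a column `v ∈ M(1,0;F)`. -/
def opowCol {n : ℕ} {F : Type*} [RCLike F] (v : MMat n n 1 0 F) : (m : ℕ) → MMat n n m 0 F
  | 0 => fun _ _ => 1
  | m + 1 => fun α z => oprod v (opowCol v m) (recast (Nat.add_comm m 1) α) z

/-- The `⊙`-product `h¹ ⊙ h² ⊙ ⋯ ⊙ hᵐ` of a family of rows `hⁱ ∈ M(0,1;F)`. -/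
def oprodRowFamily {n : ℕ} {F : Type*} [RCLike F] :
    (m : ℕ) → (Fin m → MMat n n 0 1 F) → MMat n n 0 m F
  | 0, _ => fun _ _ => 1
  | m + 1, hs => fun z α =>
      oprod (hs 0) (oprodRowFamily m fun i => hs i.succ) z (recast (Nat.add_comm m 1) α)

/-- The row vector `(h₁,…,hₙ) ∈ M(0,1;F)` determined by `h : Fin n → F`; its entry at the
degree-one column index `α'` is `h^{α'}`. -/
def rowOf {n : ℕ} {F : Type*} [RCLike F] (h : Fin n → F) : MMat n n 0 1 F :=
  fun _ α' => ∏ i, h i ^ α'.1 i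

/-- The column vector `(v₁,…,vₙ) ∈ M(1,0;F)` determined by `v : Fin n → F`. -/
def colOf {n : ℕ} {F : Type*} [RCLike F] (v : Fin n → F) : MMat n n 1 0 F :=
  fun α _ => ∏ i, v i ^ α.1 i

/-- The unit matrix `E_k ∈ M_{n,n}(k,k;F)`. -/
def unitMat (n k : ℕ) (F : Type*) [RCLike F] : MMat n n k k F :=
  fun α β => if α = β then 1 else 0

/-- The `ρ`-norm `‖A‖_ρ = (Σ_{α,α'} |A_{α,α'}|^ρ/(α!(p!p'!)^{ρ−1}))^{1/ρ}` on `M(p,p';F)`. -/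
def rnorm {n n' p p' : ℕ} {F : Type*} [RCLike F] (ρ : ℝ) (A : MMat n n' p p' F) : ℝ :=
  (∑ α : MIdx n p, ∑ α' : MIdx n' p',
      ‖A α α'‖ ^ ρ /
        ((mfact α.1 : ℝ) * ((p.factorial * p'.factorial : ℕ) : ℝ) ^ (ρ - 1))) ^ (1 / ρ)

/-- The `∞`-norm `‖A‖_∞ = sup_{α,α'} |A_{α,α'}| / (p!p'!)` on `M(p,p';F)`. -/
def rnormInf {n n' p p' : ℕ} {F : Type*} [RCLike F] (A : MMat n n' p p' F) : ℝ :=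
  (⨆ x : MIdx n p × MIdx n' p', ‖A x.1 x.2‖) / ((p.factorial * p'.factorial : ℕ) : ℝ)

/-- The `σ`-norm of a vector in `F^n`, for a real exponent `σ`. -/
def vnorm {n : ℕ} {F : Type*} [RCLike F] (σ : ℝ) (h : Fin n → F) : ℝ :=
  (∑ i, ‖h i‖ ^ σ) ^ (1 / σ)

/-- The `σ`-norm of a vector in `F^n`, for an extended real exponent `σ`
(`= max_i |h_i|` when `σ = ∞`). -/
def vnormE {n : ℕ} {F : Type*} [RCLike F] (σ : ℝ≥0∞) (h : Fin n → F) : ℝ :=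
  if σ = ∞ then ⨆ i, ‖h i‖ else (∑ i, ‖h i‖ ^ σ.toReal) ^ (1 / σ.toReal)

/-- Absolute convergence of the power series `Σ_m x^{(m)}/m!·A(m)` at the point `h ∈ F^n`:
for every column index `α'` of degree `q'`, the family `|h^α/α! · A(|α|)_{α,α'}|`, indexed by
all multi-indices `α ∈ ℕ^n`, is summable. -/
def AbsConvAt {n n' q' : ℕ} {F : Type*} [RCLike F]
    (A : (m : ℕ) → MMat n n' m q' F) (h : Fin n → F) : Prop :=
  ∀ α' : MIdx n' q', Summable fun α : Fin n → ℕ =>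
    ‖(∏ i, h i ^ α i) / (mfact α : F) * A (mdeg α) ⟨α, rfl⟩ α'‖

/-- `r = limsup_m ‖A(m)‖_ρ^{1/m}`, the reciprocal of the radius of convergence,
computed in `ℝ≥0∞`. -/
def convRadiusInv {n n' q' : ℕ} {F : Type*} [RCLike F] (ρ : ℝ)
    (A : (m : ℕ) → MMat n n' m q' F) : ℝ≥0∞ :=
  Filter.atTop.limsup fun m : ℕ => ENNReal.ofReal (rnorm ρ (A m)) ^ (1 / (m : ℝ))

/-- `r = limsup_m ‖A(m)‖_∞^{1/m}` computed in `ℝ≥0∞`. -/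
def convRadiusInvInf {n n' q' : ℕ} {F : Type*} [RCLike F]
    (A : (m : ℕ) → MMat n n' m q' F) : ℝ≥0∞ :=
  Filter.atTop.limsup fun m : ℕ => ENNReal.ofReal (rnormInf (A m)) ^ (1 / (m : ℝ))

section AuxProof

open Finset

variable {n : ℕ}

lemma midx_zero_val (z : MIdx n 0) : z.1 = fun _ => 0 := by
  funext i
  have h := z.2
  simp only [mdeg, Finset.sum_eq_zero_iff, Finset.mem_univ, forall_true_left] at h
  exact h i

instance : Unique (MIdx n 0) where
  default := ⟨fun _ => 0, by simp [mdeg]⟩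
  uniq z := Subtype.ext (midx_zero_val z)

/-- The count vector of a function `f : Fin m → Fin n`. -/
def cnt {m : ℕ} (f : Fin m → Fin n) : Fin n → ℕ := fun j => ∑ k, if f k = j then 1 else 0

lemma mdeg_cnt {m : ℕ} (f : Fin m → Fin n) : mdeg (cnt f) = m := by
  unfold mdeg cnt
  rw [Finset.sum_comm]
  simp

/-- The multi-index `e_j`. -/
def sgl (j : Fin n) : Fin n → ℕ := fun i => if i = j then 1 else 0

lemma mdeg_sgl (j : Fin n) : mdeg (sgl j) = 1 := by simp [mdeg, sgl]

lemma mdeg_add {p q : ℕ} (a b : Fin n → ℕ) (ha : mdeg a = p) (hb : mdeg b = q) :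
    mdeg (a + b) = p + q := by
  simp only [mdeg, Pi.add_apply, Finset.sum_add_distrib] at *
  omega

/-- Add `e_j` to a degree-`m` multi-index. -/
def addS {m : ℕ} (j : Fin n) (δ : MIdx n m) : MIdx n (m + 1) :=
  ⟨sgl j + δ.1, by rw [mdeg_add _ _ (mdeg_sgl j) δ.2, Nat.add_comm]⟩

lemma sgl_le_iff {j : Fin n} {γ : Fin n → ℕ} : (∀ i, sgl j i ≤ γ i) ↔ 1 ≤ γ j := by
  constructor
  · intro h
    have := h j
    simpa [sgl] using this
  · intro h i
    unfold sgl
    split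
    · next hij => subst hij; exact h
    · exact Nat.zero_le _

lemma mdeg_sub_sgl {m : ℕ} (j : Fin n) (γ : MIdx n (m + 1)) (h : 1 ≤ γ.1 j) :
    mdeg (γ.1 - sgl j) = m :=
  mdeg_sub (p := 1) (q := m) (recast (by omega) γ) ⟨sgl j, mdeg_sgl j⟩ (sgl_le_iff.mpr h)

lemma sgl_bijective (hn : 0 < n) :
    Function.Bijective (fun j : Fin n => (⟨sgl j, mdeg_sgl j⟩ : MIdx n 1)) := by
  constructor
  · intro a b hab
    by_contra hne
    have := congrArg (fun β : MIdx n 1 => β.1 a) hab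
    simp [sgl, hne] at this
  · intro β
    have hsum : ∑ t, β.1 t = 1 := β.2
    have hex : ∃ i, β.1 i ≠ 0 := by
      by_contra h
      push_neg at h
      simp [h] at hsum
    obtain ⟨i, hi⟩ := hex
    have hle : β.1 i ≤ 1 := by
      have h4 := Finset.single_le_sum (f := β.1) (fun (t : Fin n) _ => Nat.zero_le (β.1 t))
        (Finset.mem_univ i)
      omega
    refine ⟨i, Subtype.ext (funext fun k => ?_)⟩
    show sgl i k = β.1 k
    by_cases hk : k = i
    · subst hk
      have hs1 : sgl k k = 1 := by simp [sgl]
      rw [hs1]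
      omega
    · have hmem : k ∈ (Finset.univ : Finset (Fin n)).erase i := Finset.mem_erase.mpr ⟨hk, Finset.mem_univ k⟩
      have h2 : β.1 i + ∑ t ∈ (Finset.univ : Finset (Fin n)).erase i, β.1 t = 1 := by
        rw [Finset.add_sum_erase _ _ (Finset.mem_univ i)]; exact hsum
      have h3 : β.1 k ≤ ∑ t ∈ (Finset.univ : Finset (Fin n)).erase i, β.1 t :=
        Finset.single_le_sum (f := β.1) (fun _ _ => Nat.zero_le _) hmem
      simp only [sgl, if_neg hk]
      omega

lemma sum_midx_one {M : Type*} [AddCommMonoid M] (hn : 0 < n) (G : MIdx n 1 → M) :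
    ∑ β : MIdx n 1, G β = ∑ j : Fin n, G ⟨sgl j, mdeg_sgl j⟩ :=
  (Fintype.sum_bijective _ (sgl_bijective hn) _ G (fun _ => rfl)).symm

lemma addS_val_self {m : ℕ} (j : Fin n) (δ : MIdx n m) : (addS j δ).1 j = δ.1 j + 1 := by
  simp [addS, sgl]
  omega

lemma addS_sub {m : ℕ} (j : Fin n) (δ : MIdx n m) : (addS j δ).1 - sgl j = δ.1 := by
  funext i
  simp only [addS, Pi.sub_apply, Pi.add_apply, sgl]
  split <;> omega

lemma sub_addS {m : ℕ} (j : Fin n) (γ : MIdx n (m + 1)) (h : 1 ≤ γ.1 j) :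
    sgl j + (γ.1 - sgl j) = γ.1 := by
  funext i
  simp only [Pi.add_apply, Pi.sub_apply, sgl]
  split
  · next hij => subst hij; omega
  · omega

/-- Summing over all degree-`(m+1)` multi-indices a function vanishing when the `j`-th entry is
zero equals summing over degree-`m` multi-indices after adding `e_j`. -/
lemma sum_addS {m : ℕ} {M : Type*} [AddCommMonoid M] (j : Fin n) (K : MIdx n (m + 1) → M)
    (hK : ∀ γ, ¬ 1 ≤ γ.1 j → K γ = 0) :
    ∑ γ : MIdx n (m + 1), K γ = ∑ δ : MIdx n m, K (addS j δ) := by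
  rw [← Finset.sum_filter_of_ne (p := fun γ : MIdx n (m+1) => 1 ≤ γ.1 j)
    (fun γ _ hne => by by_contra h; exact hne (hK γ h))]
  refine Finset.sum_bij' (fun γ hγ => (⟨γ.1 - sgl j, mdeg_sub_sgl j γ
      (by simpa using (Finset.mem_filter.mp hγ).2)⟩ : MIdx n m))
    (fun δ _ => addS j δ) (fun γ hγ => Finset.mem_univ _) (fun δ _ => ?_) ?_ ?_ ?_
  · refine Finset.mem_filter.mpr ⟨Finset.mem_univ _, ?_⟩
    rw [addS_val_self]
    omega
  · intro γ hγ
    exact Subtype.ext (sub_addS j γ (by simpa using (Finset.mem_filter.mp hγ).2))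
  · intro δ _
    exact Subtype.ext (addS_sub j δ)
  · intro γ hγ
    exact (congrArg K (Subtype.ext (sub_addS j γ
      (by simpa using (Finset.mem_filter.mp hγ).2)))).symm

lemma mfact_sgl_add (j : Fin n) (δ : Fin n → ℕ) :
    mfact (sgl j + δ) = (δ j + 1) * mfact δ := by
  unfold mfact
  rw [← Finset.mul_prod_erase Finset.univ _ (Finset.mem_univ j),
    ← Finset.mul_prod_erase Finset.univ (fun i => (δ i).factorial) (Finset.mem_univ j)]
  have h1 : ∏ i ∈ Finset.univ.erase j, ((sgl j + δ) i).factorial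
      = ∏ i ∈ Finset.univ.erase j, (δ i).factorial := by
    refine Finset.prod_congr rfl fun i hi => ?_
    have : i ≠ j := (Finset.mem_erase.mp hi).1
    simp [sgl, this]
  rw [h1]
  have h2 : (sgl j + δ) j = δ j + 1 := by simp [sgl]; omega
  rw [h2, Nat.factorial_succ, Nat.mul_assoc]

lemma cnt_cons {m : ℕ} (j : Fin n) (g : Fin m → Fin n) :
    cnt (Fin.cons j g) = sgl j + cnt g := by
  funext j'
  simp only [cnt, Pi.add_apply, sgl, Fin.sum_univ_succ, Fin.cons_zero, Fin.cons_succ]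
  congr 1
  simp [eq_comm]

lemma cnt_zero (f : Fin 0 → Fin n) : cnt f = fun _ => 0 := by
  funext j
  simp [cnt]

/-- Computation of `oprod` of a row with a matrix in `M(0,m)`. -/
lemma oprod_row_apply {F : Type*} [RCLike F] {m : ℕ} (hn : 0 < n) (h0 : Fin n → F)
    (P : MMat n n 0 m F) (z : MIdx n 0) (γ : MIdx n (1 + m)) :
    oprod (rowOf h0) P z γ
      = ∑ j : Fin n, if hj : 1 ≤ γ.1 j then
          h0 j * P z ⟨γ.1 - sgl j, mdeg_sub γ ⟨sgl j, mdeg_sgl j⟩ (sgl_le_iff.mpr hj)⟩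
        else 0 := by
  rw [Unique.eq_default z]
  unfold oprod
  rw [Fintype.sum_unique, sum_midx_one hn]
  refine Finset.sum_congr rfl fun j _ => ?_
  by_cases hj : 1 ≤ γ.1 j
  · rw [dif_pos ⟨fun i => Nat.zero_le _, sgl_le_iff.mpr hj⟩, dif_pos hj]
    have hd : ((default : MIdx n 0)).1 = fun _ => 0 := rfl
    have hm1 : mfact ((default : MIdx n 0)).1 = 1 := by rw [hd]; simp [mfact]
    have hm2 : mfact (((default : MIdx n 0)).1 - ((default : MIdx n 0)).1) = 1 := by
      rw [hd]
      have he : ((fun _ => 0) - (fun _ => 0) : Fin n → ℕ) = fun _ => 0 := by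
        funext i; simp
      rw [he]; simp [mfact]
    have hrow : rowOf h0 (default : MIdx n 0) ⟨sgl j, mdeg_sgl j⟩ = h0 j := by
      simp [rowOf, sgl, pow_ite]
    congr 1
    rw [hrow, hm1, hm2]
    norm_num
  · rw [dif_neg (fun hc => hj (sgl_le_iff.mp hc.2)), dif_neg hj]

/-- Linearization: sums of `⊙`-products of rows against a function are sums over functions
`Fin m → Fin n`. -/
lemma oprodFamily_linearize {F : Type*} [RCLike F] (hn : 0 < n) :
    ∀ (m : ℕ) (hs : Fin m → (Fin n → F)) (G : MIdx n m → F) (z : MIdx n 0),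
    ∑ γ : MIdx n m, oprodRowFamily m (fun i => rowOf (hs i)) z γ * G γ
      = ∑ f : Fin m → Fin n, (∏ k, hs k (f k)) * G ⟨cnt f, mdeg_cnt f⟩ := by
  intro m
  induction m with
  | zero =>
    intro hs G z
    rw [Fintype.sum_unique, Fintype.sum_unique]
    show (1 : F) * G default = _
    rw [one_mul, Fin.prod_univ_zero, one_mul]
    exact congrArg G (Subsingleton.elim _ _)
  | succ m ih =>
    intro hs G z
    have hstep : ∀ γ : MIdx n (m + 1),
        oprodRowFamily (m + 1) (fun i => rowOf (hs i)) z γ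
          = ∑ j : Fin n, if hj : 1 ≤ γ.1 j then
              hs 0 j * oprodRowFamily m (fun i => rowOf (hs i.succ)) z
                ⟨γ.1 - sgl j, mdeg_sub_sgl j γ hj⟩
            else 0 := by
      intro γ
      have hdef : oprodRowFamily (m + 1) (fun i => rowOf (hs i)) z γ
          = oprod (p := 0) (q := 0) (p' := 1) (q' := m) (rowOf (hs 0))
              (oprodRowFamily m (fun i => rowOf ((fun i => hs i) i.succ))) z
              (recast (Nat.add_comm m 1) γ) := rfl
      rw [hdef, oprod_row_apply hn]
      rfl
    calc ∑ γ : MIdx n (m + 1), oprodRowFamily (m + 1) (fun i => rowOf (hs i)) z γ * G γ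
        = ∑ γ : MIdx n (m + 1), ∑ j : Fin n, (if hj : 1 ≤ γ.1 j then
            hs 0 j * oprodRowFamily m (fun i => rowOf (hs i.succ)) z
              ⟨γ.1 - sgl j, mdeg_sub_sgl j γ hj⟩ * G γ else 0) := by
          refine Finset.sum_congr rfl fun γ _ => ?_
          rw [hstep γ, Finset.sum_mul]
          refine Finset.sum_congr rfl fun j _ => ?_
          by_cases hj : 1 ≤ γ.1 j
          · rw [dif_pos hj, dif_pos hj]
          · rw [dif_neg hj, dif_neg hj, zero_mul]
      _ = ∑ j : Fin n, ∑ γ : MIdx n (m + 1), (if hj : 1 ≤ γ.1 j then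
            hs 0 j * oprodRowFamily m (fun i => rowOf (hs i.succ)) z
              ⟨γ.1 - sgl j, mdeg_sub_sgl j γ hj⟩ * G γ else 0) := Finset.sum_comm
      _ = ∑ j : Fin n, ∑ δ : MIdx n m,
            hs 0 j * oprodRowFamily m (fun i => rowOf (hs i.succ)) z δ * G (addS j δ) := by
          refine Finset.sum_congr rfl fun j _ => ?_
          rw [sum_addS j _ (fun γ h => dif_neg h)]
          refine Finset.sum_congr rfl fun δ _ => ?_
          have hd : 1 ≤ (addS j δ).1 j := by rw [addS_val_self]; omega
          rw [dif_pos hd]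
          have hrw : (⟨(addS j δ).1 - sgl j, mdeg_sub_sgl j (addS j δ) hd⟩ : MIdx n m) = δ :=
            Subtype.ext (addS_sub j δ)
          rw [hrw]
      _ = ∑ j : Fin n, hs 0 j * ∑ g : Fin m → Fin n,
            (∏ k, hs k.succ (g k)) * G (addS j ⟨cnt g, mdeg_cnt g⟩) := by
          refine Finset.sum_congr rfl fun j _ => ?_
          have hih := ih (fun i => hs i.succ) (fun δ => G (addS j δ)) z
          calc ∑ δ : MIdx n m,
                hs 0 j * oprodRowFamily m (fun i => rowOf (hs i.succ)) z δ * G (addS j δ)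
              = hs 0 j * ∑ δ : MIdx n m,
                  oprodRowFamily m (fun i => rowOf (hs i.succ)) z δ * G (addS j δ) := by
                rw [Finset.mul_sum]
                exact Finset.sum_congr rfl fun δ _ => by ring
            _ = hs 0 j * ∑ g : Fin m → Fin n,
                  (∏ k, hs k.succ (g k)) * G (addS j ⟨cnt g, mdeg_cnt g⟩) := by rw [hih]
      _ = ∑ f : Fin (m + 1) → Fin n, (∏ k, hs k (f k)) * G ⟨cnt f, mdeg_cnt f⟩ := by
          rw [← Equiv.sum_comp (Fin.consEquiv (fun _ : Fin (m + 1) => Fin n))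
            (fun f => (∏ k, hs k (f k)) * G ⟨cnt f, mdeg_cnt f⟩)]
          rw [Fintype.sum_prod_type]
          refine Finset.sum_congr rfl fun j _ => ?_
          rw [Finset.mul_sum]
          refine Finset.sum_congr rfl fun g _ => ?_
          have hcons : Fin.consEquiv (fun _ : Fin (m + 1) => Fin n) (j, g) = Fin.cons j g := rfl
          rw [hcons]
          have h1 : (∏ k, hs k ((Fin.cons j g : Fin (m + 1) → Fin n) k))
              = hs 0 j * ∏ k, hs k.succ (g k) := by
            rw [Fin.prod_univ_succ]
            simp
          have h2 : (⟨cnt (Fin.cons j g : Fin (m + 1) → Fin n), mdeg_cnt _⟩ : MIdx n (m + 1))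
              = addS j ⟨cnt g, mdeg_cnt g⟩ := Subtype.ext (cnt_cons j g)
          rw [h1, h2]
          ring

/-- Grouping sums over functions by their count vector. -/
lemma sum_cnt_weight (hn : 0 < n) :
    ∀ (m : ℕ) (w : (Fin n → ℕ) → ℝ),
    ∑ f : Fin m → Fin n, (mfact (cnt f) : ℝ) * w (cnt f)
      = (m.factorial : ℝ) * ∑ γ : MIdx n m, w γ.1 := by
  intro m
  induction m with
  | zero =>
    intro w
    rw [Fintype.sum_unique, Fintype.sum_unique]
    have h1 : cnt (default : Fin 0 → Fin n) = fun _ => 0 := cnt_zero _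
    have h2 : ((default : MIdx n 0)).1 = fun _ => 0 := rfl
    rw [h1, h2]
    simp [mfact]
  | succ m ih =>
    intro w
    calc ∑ f : Fin (m + 1) → Fin n, (mfact (cnt f) : ℝ) * w (cnt f)
        = ∑ j : Fin n, ∑ g : Fin m → Fin n,
            (mfact (cnt g) : ℝ) * ((cnt g j + 1 : ℕ) * w (sgl j + cnt g)) := by
          rw [← Equiv.sum_comp (Fin.consEquiv (fun _ : Fin (m + 1) => Fin n))
            (fun f => (mfact (cnt f) : ℝ) * w (cnt f))]
          rw [Fintype.sum_prod_type]
          refine Finset.sum_congr rfl fun j _ => Finset.sum_congr rfl fun g _ => ?_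
          have hcons : Fin.consEquiv (fun _ : Fin (m + 1) => Fin n) (j, g) = Fin.cons j g := rfl
          rw [hcons, cnt_cons, mfact_sgl_add]
          push_cast
          ring
      _ = ∑ j : Fin n, (m.factorial : ℝ) * ∑ δ : MIdx n m, ((δ.1 j + 1 : ℕ) : ℝ) * w (sgl j + δ.1) := by
          refine Finset.sum_congr rfl fun j _ => ?_
          exact ih (fun δ => ((δ j + 1 : ℕ) : ℝ) * w (sgl j + δ))
      _ = (m.factorial : ℝ) * ∑ j : Fin n, ∑ γ : MIdx n (m + 1), (γ.1 j : ℝ) * w γ.1 := by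
          rw [Finset.mul_sum]
          refine Finset.sum_congr rfl fun j _ => ?_
          congr 1
          rw [sum_addS j (fun γ => (γ.1 j : ℝ) * w γ.1) (fun γ h => by
            have h0 : γ.1 j = 0 := by omega
            show (γ.1 j : ℝ) * w γ.1 = 0
            rw [h0]; simp)]
          refine Finset.sum_congr rfl fun δ _ => ?_
          rw [addS_val_self]
          have hv : (addS j δ).1 = sgl j + δ.1 := rfl
          rw [hv]
      _ = ((m + 1).factorial : ℝ) * ∑ γ : MIdx n (m + 1), w γ.1 := by
          rw [Finset.sum_comm]
          have h1 : ∀ γ : MIdx n (m + 1), ∑ j : Fin n, (γ.1 j : ℝ) * w γ.1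
              = ((m + 1 : ℕ) : ℝ) * w γ.1 := by
            intro γ
            rw [← Finset.sum_mul]
            congr 1
            rw [← Nat.cast_sum]
            exact congrArg _ γ.2
          rw [Finset.sum_congr rfl fun γ _ => h1 γ, ← Finset.mul_sum]
          rw [Nat.factorial_succ]
          push_cast
          ring

end AuxProof

lemma mfact_pos {n : ℕ} (γ : Fin n → ℕ) : 0 < mfact γ :=
  Finset.prod_pos fun i _ => (γ i).factorial_pos

lemma vnorm_nonneg {n : ℕ} {F : Type*} [RCLike F] (σ : ℝ) (h : Fin n → F) :
    0 ≤ vnorm σ h :=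
  Real.rpow_nonneg (Finset.sum_nonneg fun j _ => Real.rpow_nonneg (norm_nonneg _) _) _

/-- The key pointwise (in the column index) inequality, via Hölder's inequality over
functions `Fin m → Fin n`. -/
lemma key_ineq {n n' m q' : ℕ} {F : Type*} [RCLike F] (hn : 0 < n)
    (ρ ϱ : ℝ) (hpq : ϱ.HolderConjugate ρ)
    (hs : Fin m → (Fin n → F)) (A : MMat n n' m q' F) (α' : MIdx n' q') :
    ‖∑ γ : MIdx n m,
        oprodRowFamily m (fun i => rowOf (hs i)) default γ / (m.factorial : F) * A γ α'‖ ^ ρ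
      ≤ (∏ i, vnorm ϱ (hs i)) ^ ρ *
        ((∑ γ : MIdx n m, ‖A γ α'‖ ^ ρ / (mfact γ.1 : ℝ)) / (m.factorial : ℝ) ^ (ρ - 1)) := by
  classical
  have hρ0 : (0:ℝ) < ρ := lt_trans one_pos hpq.symm.lt
  have hϱ0 : (0:ℝ) < ϱ := lt_trans one_pos hpq.lt
  have hmf : (0:ℝ) < (m.factorial : ℝ) := by exact_mod_cast m.factorial_pos
  -- value of the entry
  have hCval : (∑ γ : MIdx n m,
      oprodRowFamily m (fun i => rowOf (hs i)) default γ / (m.factorial : F) * A γ α')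
      = (∑ f : Fin m → Fin n, (∏ k, hs k (f k)) * A ⟨cnt f, mdeg_cnt f⟩ α') / (m.factorial : F) := by
    rw [← oprodFamily_linearize hn m hs (fun γ => A γ α') default, Finset.sum_div]
    exact Finset.sum_congr rfl fun γ _ => by rw [div_mul_eq_mul_div]
  have hnorm : ‖∑ γ : MIdx n m,
      oprodRowFamily m (fun i => rowOf (hs i)) default γ / (m.factorial : F) * A γ α'‖
      ≤ ∑ f : Fin m → Fin n,
          (∏ k, ‖hs k (f k)‖) * (‖A ⟨cnt f, mdeg_cnt f⟩ α'‖ / (m.factorial : ℝ)) := by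
    rw [hCval, norm_div, RCLike.norm_natCast]
    have h1 : ‖∑ f : Fin m → Fin n, (∏ k, hs k (f k)) * A ⟨cnt f, mdeg_cnt f⟩ α'‖
        ≤ ∑ f : Fin m → Fin n, (∏ k, ‖hs k (f k)‖) * ‖A ⟨cnt f, mdeg_cnt f⟩ α'‖ := by
      refine le_trans (norm_sum_le _ _) (Finset.sum_le_sum fun f _ => ?_)
      rw [norm_mul, norm_prod]
    calc ‖∑ f : Fin m → Fin n, (∏ k, hs k (f k)) * A ⟨cnt f, mdeg_cnt f⟩ α'‖ / (m.factorial : ℝ)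
        ≤ (∑ f : Fin m → Fin n, (∏ k, ‖hs k (f k)‖) * ‖A ⟨cnt f, mdeg_cnt f⟩ α'‖) /
            (m.factorial : ℝ) := by
          gcongr
      _ = ∑ f : Fin m → Fin n,
            (∏ k, ‖hs k (f k)‖) * (‖A ⟨cnt f, mdeg_cnt f⟩ α'‖ / (m.factorial : ℝ)) := by
          rw [Finset.sum_div]
          exact Finset.sum_congr rfl fun f _ => mul_div_assoc _ _ _
  -- Hölder
  have hhold := Real.inner_le_Lp_mul_Lq_of_nonneg (s := Finset.univ)
    (f := fun f : Fin m → Fin n => ∏ k, ‖hs k (f k)‖)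
    (g := fun f : Fin m → Fin n => ‖A ⟨cnt f, mdeg_cnt f⟩ α'‖ / (m.factorial : ℝ))
    hpq (fun f _ => Finset.prod_nonneg fun k _ => norm_nonneg _)
    (fun f _ => div_nonneg (norm_nonneg _) hmf.le)
  have hhold' : ∑ f : Fin m → Fin n,
        (∏ k, ‖hs k (f k)‖) * (‖A ⟨cnt f, mdeg_cnt f⟩ α'‖ / (m.factorial : ℝ))
      ≤ (∑ f : Fin m → Fin n, (∏ k, ‖hs k (f k)‖) ^ ϱ) ^ (1/ϱ) *
        (∑ f : Fin m → Fin n, (‖A ⟨cnt f, mdeg_cnt f⟩ α'‖ / (m.factorial : ℝ)) ^ ρ) ^ (1/ρ) :=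
    hhold
  -- first factor
  have hU : (∑ f : Fin m → Fin n, (∏ k, ‖hs k (f k)‖) ^ ϱ) ^ (1/ϱ) = ∏ i, vnorm ϱ (hs i) := by
    have h1 : ∀ f : Fin m → Fin n, (∏ k, ‖hs k (f k)‖) ^ ϱ = ∏ k, ‖hs k (f k)‖ ^ ϱ :=
      fun f => (Real.finset_prod_rpow _ _ (fun k _ => norm_nonneg _) _).symm
    rw [Finset.sum_congr rfl fun f _ => h1 f,
      ← Fintype.prod_sum (κ := fun _ : Fin m => Fin n) (fun k j => ‖hs k j‖ ^ ϱ)]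
    rw [← Real.finset_prod_rpow _ _
      (fun k _ => Finset.sum_nonneg fun j _ => Real.rpow_nonneg (norm_nonneg _) _) _]
    exact Finset.prod_congr rfl fun k _ => rfl
  -- second factor
  have hW : (∑ f : Fin m → Fin n, (‖A ⟨cnt f, mdeg_cnt f⟩ α'‖ / (m.factorial : ℝ)) ^ ρ)
      = (∑ γ : MIdx n m, ‖A γ α'‖ ^ ρ / (mfact γ.1 : ℝ)) / (m.factorial : ℝ) ^ (ρ - 1) := by
    have h1 : ∀ f : Fin m → Fin n, (‖A ⟨cnt f, mdeg_cnt f⟩ α'‖ / (m.factorial : ℝ)) ^ ρ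
        = ‖A ⟨cnt f, mdeg_cnt f⟩ α'‖ ^ ρ / (m.factorial : ℝ) ^ ρ :=
      fun f => Real.div_rpow (norm_nonneg _) hmf.le _
    rw [Finset.sum_congr rfl fun f _ => h1 f, ← Finset.sum_div]
    have h2 : ∀ f : Fin m → Fin n, ‖A ⟨cnt f, mdeg_cnt f⟩ α'‖ ^ ρ
        = (mfact (cnt f) : ℝ) * ((if h : mdeg (cnt f) = m then ‖A ⟨cnt f, h⟩ α'‖ ^ ρ else 0) /
            (mfact (cnt f) : ℝ)) := by
      intro f
      rw [dif_pos (mdeg_cnt f), mul_comm, div_mul_cancel₀]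
      exact_mod_cast (mfact_pos (cnt f)).ne'
    rw [Finset.sum_congr rfl fun f _ => h2 f,
      sum_cnt_weight hn m (fun γv => (if h : mdeg γv = m then ‖A ⟨γv, h⟩ α'‖ ^ ρ else 0) /
        (mfact γv : ℝ))]
    have h3 : ∀ γ : MIdx n m,
        (if h : mdeg γ.1 = m then ‖A ⟨γ.1, h⟩ α'‖ ^ ρ else 0) / (mfact γ.1 : ℝ)
          = ‖A γ α'‖ ^ ρ / (mfact γ.1 : ℝ) := by
      intro γ
      rw [dif_pos γ.2]
    rw [Finset.sum_congr rfl fun γ _ => h3 γ]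
    have h4 : (m.factorial : ℝ) ^ ρ = (m.factorial : ℝ) ^ (ρ - 1) * (m.factorial : ℝ) := by
      nth_rewrite 3 [← Real.rpow_one (m.factorial : ℝ)]
      rw [← Real.rpow_add hmf]
      norm_num
    rw [h4, mul_comm ((m.factorial : ℝ) ^ (ρ - 1)) _, ← div_div,
      mul_div_cancel_left₀ _ hmf.ne']
  -- combine
  have hXnn : 0 ≤ (∑ γ : MIdx n m, ‖A γ α'‖ ^ ρ / (mfact γ.1 : ℝ)) / (m.factorial : ℝ) ^ (ρ - 1) :=
    div_nonneg (Finset.sum_nonneg fun γ _ =>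
      div_nonneg (Real.rpow_nonneg (norm_nonneg _) _) (Nat.cast_nonneg _))
      (Real.rpow_nonneg hmf.le _)
  have hVnn : 0 ≤ ∏ i, vnorm ϱ (hs i) := Finset.prod_nonneg fun i _ => vnorm_nonneg ϱ (hs i)
  have hfinal : ‖∑ γ : MIdx n m,
      oprodRowFamily m (fun i => rowOf (hs i)) default γ / (m.factorial : F) * A γ α'‖
      ≤ (∏ i, vnorm ϱ (hs i)) *
        ((∑ γ : MIdx n m, ‖A γ α'‖ ^ ρ / (mfact γ.1 : ℝ)) / (m.factorial : ℝ) ^ (ρ - 1)) ^ (1/ρ) := by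
    refine le_trans hnorm (le_trans hhold' ?_)
    rw [hU, hW]
  calc ‖∑ γ : MIdx n m,
      oprodRowFamily m (fun i => rowOf (hs i)) default γ / (m.factorial : F) * A γ α'‖ ^ ρ
      ≤ ((∏ i, vnorm ϱ (hs i)) *
          ((∑ γ : MIdx n m, ‖A γ α'‖ ^ ρ / (mfact γ.1 : ℝ)) /
            (m.factorial : ℝ) ^ (ρ - 1)) ^ (1/ρ)) ^ ρ :=
        Real.rpow_le_rpow (norm_nonneg _) hfinal hρ0.le
    _ = (∏ i, vnorm ϱ (hs i)) ^ ρ *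
          ((∑ γ : MIdx n m, ‖A γ α'‖ ^ ρ / (mfact γ.1 : ℝ)) / (m.factorial : ℝ) ^ (ρ - 1)) := by
        rw [Real.mul_rpow hVnn (Real.rpow_nonneg hXnn _), one_div,
          Real.rpow_inv_rpow hXnn hρ0.ne']

/-- For `1 < ρ < ∞` with conjugate exponent `ϱ`, all `m, q'`,
`A ∈ M_{n,n'}(m,q';F)` and row vectors `h¹,…,hᵐ ∈ M_{n,n}(0,1;F)`:
`‖((h¹⊙h²⊙⋯⊙hᵐ)/m!)·A‖_ρ ≤ ‖h¹‖_ϱ·‖h²‖_ϱ⋯‖hᵐ‖_ϱ·‖A‖_ρ`. -/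
theorem rnorm_oprodFamily_mmul_le {n n' m q' : ℕ} {F : Type*} [RCLike F] (hn : 0 < n)
    (hn' : 0 < n') (ρ ϱ : ℝ) (hρ : 1 < ρ) (hconj : 1 / ρ + 1 / ϱ = 1)
    (hs : Fin m → (Fin n → F)) (A : MMat n n' m q' F) :
    rnorm ρ (mmul (fun (z : MIdx n 0) (γ : MIdx n m) =>
        oprodRowFamily m (fun i => rowOf (hs i)) z γ / (m.factorial : F)) A) ≤
      (∏ i, vnorm ϱ (hs i)) * rnorm ρ A := by
  classical
  have hρ0 : (0:ℝ) < ρ := lt_trans one_pos hρ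
  have hpq' : ρ.HolderConjugate ϱ := Real.holderConjugate_iff.mpr ⟨hρ, by rw [← one_div, ← one_div]; exact hconj⟩
  have hpq : ϱ.HolderConjugate ρ := hpq'.symm
  have hq' : (0:ℝ) < (q'.factorial : ℝ) := by exact_mod_cast q'.factorial_pos
  have hmf : (0:ℝ) < (m.factorial : ℝ) := by exact_mod_cast m.factorial_pos
  have hVnn : 0 ≤ ∏ i, vnorm ϱ (hs i) := Finset.prod_nonneg fun i _ => vnorm_nonneg ϱ (hs i)
  -- the sums in the norms
  have hSC : rnorm ρ (mmul (fun (z : MIdx n 0) (γ : MIdx n m) =>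
        oprodRowFamily m (fun i => rowOf (hs i)) z γ / (m.factorial : F)) A)
      = (∑ α' : MIdx n' q',
          ‖∑ γ : MIdx n m, oprodRowFamily m (fun i => rowOf (hs i)) default γ /
              (m.factorial : F) * A γ α'‖ ^ ρ /
            ((q'.factorial : ℝ) ^ (ρ - 1))) ^ (1/ρ) := by
    rw [rnorm, Fintype.sum_unique]
    congr 1
    refine Finset.sum_congr rfl fun α' _ => ?_
    have hd : mfact ((default : MIdx n 0)).1 = 1 := by
      have : ((default : MIdx n 0)).1 = fun _ => 0 := rfl
      rw [this]; simp [mfact]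
    rw [hd]
    have : ((Nat.factorial 0 * Nat.factorial q' : ℕ) : ℝ) = (q'.factorial : ℝ) := by
      simp [Nat.factorial]
    rw [this, Nat.cast_one, one_mul]
    rfl
  have hSA : rnorm ρ A = (∑ γ : MIdx n m, ∑ α' : MIdx n' q',
      ‖A γ α'‖ ^ ρ / ((mfact γ.1 : ℝ) *
        ((m.factorial * q'.factorial : ℕ) : ℝ) ^ (ρ - 1))) ^ (1/ρ) := rfl
  have hsum : (∑ α' : MIdx n' q',
      ‖∑ γ : MIdx n m, oprodRowFamily m (fun i => rowOf (hs i)) default γ /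
          (m.factorial : F) * A γ α'‖ ^ ρ / ((q'.factorial : ℝ) ^ (ρ - 1)))
      ≤ (∏ i, vnorm ϱ (hs i)) ^ ρ * ∑ γ : MIdx n m, ∑ α' : MIdx n' q',
          ‖A γ α'‖ ^ ρ / ((mfact γ.1 : ℝ) *
            ((m.factorial * q'.factorial : ℕ) : ℝ) ^ (ρ - 1)) := by
    rw [Finset.sum_comm, Finset.mul_sum]
    refine Finset.sum_le_sum fun α' _ => ?_
    have hkey := key_ineq hn ρ ϱ hpq hs A α'
    have hqpow : (0:ℝ) < (q'.factorial : ℝ) ^ (ρ - 1) := Real.rpow_pos_of_pos hq' _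
    have halg : (∏ i, vnorm ϱ (hs i)) ^ ρ * ∑ γ : MIdx n m,
        ‖A γ α'‖ ^ ρ / ((mfact γ.1 : ℝ) * ((m.factorial * q'.factorial : ℕ) : ℝ) ^ (ρ - 1))
        = ((∏ i, vnorm ϱ (hs i)) ^ ρ *
            ((∑ γ : MIdx n m, ‖A γ α'‖ ^ ρ / (mfact γ.1 : ℝ)) /
              (m.factorial : ℝ) ^ (ρ - 1))) / ((q'.factorial : ℝ) ^ (ρ - 1)) := by
      rw [mul_div_assoc, Finset.sum_div, Finset.sum_div]
      congr 1
      refine Finset.sum_congr rfl fun γ _ => ?_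
      rw [Nat.cast_mul, Real.mul_rpow hmf.le hq'.le, div_div, div_div]
    rw [halg]
    gcongr
  have hSCnn : 0 ≤ ∑ α' : MIdx n' q',
      ‖∑ γ : MIdx n m, oprodRowFamily m (fun i => rowOf (hs i)) default γ /
          (m.factorial : F) * A γ α'‖ ^ ρ / ((q'.factorial : ℝ) ^ (ρ - 1)) :=
    Finset.sum_nonneg fun α' _ => div_nonneg (Real.rpow_nonneg (norm_nonneg _) _)
      (Real.rpow_nonneg hq'.le _)
  have hSAnn : 0 ≤ ∑ γ : MIdx n m, ∑ α' : MIdx n' q',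
      ‖A γ α'‖ ^ ρ / ((mfact γ.1 : ℝ) *
        ((m.factorial * q'.factorial : ℕ) : ℝ) ^ (ρ - 1)) :=
    Finset.sum_nonneg fun γ _ => Finset.sum_nonneg fun α' _ =>
      div_nonneg (Real.rpow_nonneg (norm_nonneg _) _)
        (mul_nonneg (Nat.cast_nonneg _) (Real.rpow_nonneg (Nat.cast_nonneg _) _))
  rw [hSC, hSA]
  calc (∑ α' : MIdx n' q',
      ‖∑ γ : MIdx n m, oprodRowFamily m (fun i => rowOf (hs i)) default γ /
          (m.factorial : F) * A γ α'‖ ^ ρ / ((q'.factorial : ℝ) ^ (ρ - 1))) ^ (1/ρ)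
      ≤ ((∏ i, vnorm ϱ (hs i)) ^ ρ * ∑ γ : MIdx n m, ∑ α' : MIdx n' q',
          ‖A γ α'‖ ^ ρ / ((mfact γ.1 : ℝ) *
            ((m.factorial * q'.factorial : ℕ) : ℝ) ^ (ρ - 1))) ^ (1/ρ) :=
        Real.rpow_le_rpow hSCnn hsum (by positivity)
    _ = (∏ i, vnorm ϱ (hs i)) * (∑ γ : MIdx n m, ∑ α' : MIdx n' q',
          ‖A γ α'‖ ^ ρ / ((mfact γ.1 : ℝ) *
            ((m.factorial * q'.factorial : ℕ) : ℝ) ^ (ρ - 1))) ^ (1/ρ) := by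
        rw [Real.mul_rpow (Real.rpow_nonneg hVnn _) hSAnn, one_div,
          Real.rpow_rpow_inv hVnn hρ0.ne']

end
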